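/- Let k : ℝᵖ × ℝᵖ → ℝ be a symmetric function and a₁, a₂, a₃, a₄ ∈ ℝᵖ. Define ψ(a₁,a₂,a₃,a₄) = (1/2)·Σ_{1≤i<j≤4} k(aᵢ,aⱼ)² − (1/4)·Σ_{i=1}^{4} (Σ_{j≠i} k(aᵢ,aⱼ))² + (1/6)·(Σ_{1≤i<j≤4} k(aᵢ,aⱼ))². Then ψ(a₁,a₂,a₃,a₄) = (1/24)·(2k(a₁,a₂) + 2k(a₃,a₄) − k(a₁,a₃) − k(a₁,a₄) − k(a₂,a₃) − k(a₂,a₄))² + (1/8)·(k(a₁,a₃) + k(a₂,a₄) − k(a₁,a₄) − k(a₂,a₃))². In particular ψ is nonnegative. -/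
import Mathlib


/-- The kernel `ψ` of the pooled-sample variance estimator, built from a symmetric
bivariate function `k` evaluated at four points. -/
noncomputable def psiKernel {p : ℕ} (k : (Fin p → ℝ) → (Fin p → ℝ) → ℝ)
    (a₁ a₂ a₃ a₄ : Fin p → ℝ) : ℝ :=
  (1 / 2) * ((k a₁ a₂) ^ 2 + (k a₁ a₃) ^ 2 + (k a₁ a₄) ^ 2 +
      (k a₂ a₃) ^ 2 + (k a₂ a₄) ^ 2 + (k a₃ a₄) ^ 2)
  - (1 / 4) * ((k a₁ a₂ + k a₁ a₃ + k a₁ a₄) ^ 2 + (k a₂ a₁ + k a₂ a₃ + k a₂ a₄) ^ 2 +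
      (k a₃ a₁ + k a₃ a₂ + k a₃ a₄) ^ 2 + (k a₄ a₁ + k a₄ a₂ + k a₄ a₃) ^ 2)
  + (1 / 6) * (k a₁ a₂ + k a₁ a₃ + k a₁ a₄ + k a₂ a₃ + k a₂ a₄ + k a₃ a₄) ^ 2

/-- Algebraic identity expressing `ψ` as a sum of two squares; in particular `ψ ≥ 0`. -/
theorem stmt_2 {p : ℕ} (k : (Fin p → ℝ) → (Fin p → ℝ) → ℝ)
    (hsymm : ∀ x y, k x y = k y x) (a₁ a₂ a₃ a₄ : Fin p → ℝ) :
    psiKernel k a₁ a₂ a₃ a₄ =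
      (1 / 24) * (2 * k a₁ a₂ + 2 * k a₃ a₄ - k a₁ a₃ - k a₁ a₄ - k a₂ a₃ - k a₂ a₄) ^ 2
      + (1 / 8) * (k a₁ a₃ + k a₂ a₄ - k a₁ a₄ - k a₂ a₃) ^ 2 ∧
    0 ≤ psiKernel k a₁ a₂ a₃ a₄ := by
  have h : psiKernel k a₁ a₂ a₃ a₄ =
      (1 / 24) * (2 * k a₁ a₂ + 2 * k a₃ a₄ - k a₁ a₃ - k a₁ a₄ - k a₂ a₃ - k a₂ a₄) ^ 2
      + (1 / 8) * (k a₁ a₃ + k a₂ a₄ - k a₁ a₄ - k a₂ a₃) ^ 2 := by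
    simp only [psiKernel, hsymm a₂ a₁, hsymm a₃ a₁, hsymm a₃ a₂, hsymm a₄ a₁, hsymm a₄ a₂,
      hsymm a₄ a₃]
    ring
  exact ⟨h, h ▸ by positivity⟩
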